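/- arXiv:0807.0383 — 3 statements merged into one kernel-verified Lean document; each statement's English description precedes it below -/
import Mathlib

section
/- Let λ be a partition of n, written as (λ_1,…,λ_n) with trailing zeros, and define A_λ(v) = (Π_{i=1}^n (v + λ_i + n − i)) / H_λ. Then for every integer v, A_λ(v) is an integer. -/
open Finset Polynomial

/-- The `i`-th part (0-indexed) of a partition of `n`, listed in weakly
decreasing order with trailing zeros (`λ_{i+1}` in the paper's 1-indexed notation). -/
def partFun {n : ℕ} (p : Nat.Partition n) (i : ℕ) : ℕ :=
  (p.parts.sort (· ≥ ·)).getD i 0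

/-- The cells `(i, j)` (0-indexed) of the Young diagram of `p`. -/
def cells {n : ℕ} (p : Nat.Partition n) : Finset (ℕ × ℕ) :=
  (Finset.range n ×ˢ Finset.range n).filter fun c => c.2 < partFun p c.1

/-- The content `j - i` of a (0-indexed) cell `(i, j)`. -/
def cellContent (c : ℕ × ℕ) : ℤ := (c.2 : ℤ) - (c.1 : ℤ)

/-- The `j`-th part (0-indexed) of the conjugate partition of `p`. -/
def conjFun {n : ℕ} (p : Nat.Partition n) (j : ℕ) : ℕ :=
  ((Finset.range n).filter fun i => j < partFun p i).card

/-- The hook length `λ_i - j + λ'_j - i + 1` (1-indexed) of the (0-indexed) cell `c` of `p`. -/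
def hook {n : ℕ} (p : Nat.Partition n) (c : ℕ × ℕ) : ℕ :=
  (partFun p c.1 - c.2) + (conjFun p c.2 - c.1) - 1

/-- A standard Young tableau of shape `p`, encoded as a bijective labelling of the
cells of `p` by `Fin n` that increases along rows and columns. -/
def IsSYT {n : ℕ} (p : Nat.Partition n) (T : {c : ℕ × ℕ // c ∈ cells p} → Fin n) : Prop :=
  Function.Bijective T ∧
    ∀ a b : {c : ℕ × ℕ // c ∈ cells p},
      ((a.1.1 = b.1.1 ∧ a.1.2 < b.1.2) ∨ (a.1.2 = b.1.2 ∧ a.1.1 < b.1.1)) → T a < T b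

/-- `f_λ`, the number of standard Young tableaux of shape `p`. -/
noncomputable def sytCount {n : ℕ} (p : Nat.Partition n) : ℕ :=
  Nat.card {T : {c : ℕ × ℕ // c ∈ cells p} → Fin n // IsSYT p T}

/-- The multiset `{c_u : u ∈ λ}` of contents of the cells of `p`, as rational numbers. -/
def contents {n : ℕ} (p : Nat.Partition n) : Multiset ℚ :=
  (cells p).val.map fun c => (cellContent c : ℚ)

/-- The multiset `{h_u² : u ∈ λ}` of squares of the hook lengths of the cells of `p`. -/
def hooksSq {n : ℕ} (p : Nat.Partition n) : Multiset ℚ :=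
  (cells p).val.map fun c => ((hook p c : ℚ)) ^ 2

/-- The multiset of shifted parts `{λ_i + n - i : 1 ≤ i ≤ n}` of `p`. -/
def shiftedParts {n : ℕ} (p : Nat.Partition n) : Multiset ℚ :=
  (Finset.range n).val.map fun i => (partFun p i : ℚ) + (n : ℚ) - 1 - (i : ℚ)

/-- The number of cycles of a permutation, counting fixed points as cycles. -/
def cycleCount {n : ℕ} (w : Equiv.Perm (Fin n)) : ℕ :=
  w.cycleType.card + (Finset.univ.filter fun x => w x = x).card

/-- The number of fixed points of a permutation. -/
def fixedPointCount {n : ℕ} (w : Equiv.Perm (Fin n)) : ℕ :=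
  (Finset.univ.filter fun x => w x = x).card


namespace Stmt7

variable {n : ℕ} (p : Nat.Partition n)

/-- The β-set element `λ_i + n - 1 - i`. -/
def B (p : Nat.Partition n) (i : ℕ) : ℕ := partFun p i + (n - 1 - i)

/-- The `j`-th gap `n + j - λ'_j`. -/
def C (p : Nat.Partition n) (j : ℕ) : ℕ := (n + j) - conjFun p j

lemma sum_getD_aux (l : List ℕ) : ∀ m, l.length ≤ m → ∑ i ∈ range m, l.getD i 0 = l.sum := by
  induction l with
  | nil => intro m _; simp
  | cons a t ih =>
    intro m hm
    have h1 : 1 ≤ m := le_trans (by simp) hm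
    obtain ⟨m', rfl⟩ : ∃ m', m = m' + 1 := ⟨m - 1, by omega⟩
    rw [Finset.sum_range_succ']
    simp only [List.getD_cons_succ, List.getD_cons_zero, List.sum_cons]
    rw [ih m' (by simpa using Nat.succ_le_succ_iff.mp hm)]
    omega

lemma partFun_anti {i j : ℕ} (h : i ≤ j) : partFun p j ≤ partFun p i := by
  unfold partFun
  set l := p.parts.sort (· ≥ ·) with hl
  by_cases hj : j < l.length
  · have hi : i < l.length := lt_of_le_of_lt h hj
    rw [List.getD_eq_getElem _ _ hj, List.getD_eq_getElem _ _ hi]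
    have hs : l.Pairwise (· ≥ ·) := p.parts.pairwise_sort _
    rcases eq_or_lt_of_le h with rfl | hlt
    · exact le_refl _
    · exact hs.rel_get_of_lt (a := ⟨i, hi⟩) (b := ⟨j, hj⟩) hlt
  · rw [List.getD_eq_default _ _ (le_of_not_gt hj)]
    exact Nat.zero_le _

lemma partFun_le (i : ℕ) : partFun p i ≤ n := by
  unfold partFun
  set l := p.parts.sort (· ≥ ·) with hl
  by_cases hi : i < l.length
  · rw [List.getD_eq_getElem _ _ hi]
    have hmem : l[i] ∈ p.parts := by
      rw [← Multiset.mem_sort (· ≥ ·)]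
      exact List.getElem_mem _
    calc l[i] ≤ p.parts.sum := Multiset.single_le_sum (fun x _ => Nat.zero_le x) _ hmem
    _ = n := p.parts_sum
  · rw [List.getD_eq_default _ _ (le_of_not_gt hi)]
    exact Nat.zero_le _

lemma sum_partFun : ∑ i ∈ range n, partFun p i = n := by
  unfold partFun
  have hlen : (p.parts.sort (· ≥ ·)).length ≤ n := by
    rw [Multiset.length_sort]
    calc p.parts.card = p.parts.card • 1 := by simp
    _ ≤ p.parts.sum := Multiset.card_nsmul_le_sum (fun x hx => p.parts_pos hx)
    _ = n := p.parts_sum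
  rw [sum_getD_aux _ n hlen]
  have := Multiset.sort_eq p.parts (· ≥ ·)
  calc (p.parts.sort (· ≥ ·)).sum = (↑(p.parts.sort (· ≥ ·)) : Multiset ℕ).sum := by
        rw [Multiset.sum_coe]
  _ = p.parts.sum := by rw [this]
  _ = n := p.parts_sum


lemma lt_conjFun_iff {i j : ℕ} : i < conjFun p j ↔ i < n ∧ j < partFun p i := by
  set S := (Finset.range n).filter fun k => j < partFun p k with hS
  have mem_iff : ∀ k, k ∈ S ↔ (k < n ∧ j < partFun p k) := by
    intro k; simp [hS, Finset.mem_filter]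
  constructor
  · intro h
    by_contra hc
    have hsub : S ⊆ range i := by
      intro b hb
      rw [mem_iff] at hb
      rw [mem_range]
      by_contra hbi
      exact hc ⟨lt_of_le_of_lt (le_of_not_gt hbi) hb.1,
        lt_of_lt_of_le hb.2 (partFun_anti p (le_of_not_gt hbi))⟩
    have := Finset.card_le_card hsub
    simp only [Finset.card_range] at this
    have hSc : S.card = conjFun p j := rfl
    omega
  · intro ⟨hin, hj⟩
    have hsub : range (i + 1) ⊆ S := by
      intro a ha
      rw [mem_range] at ha
      rw [mem_iff]
      exact ⟨by omega, lt_of_lt_of_le hj (partFun_anti p (by omega))⟩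
    have := Finset.card_le_card hsub
    simp only [Finset.card_range] at this
    have hSc : S.card = conjFun p j := rfl
    omega

lemma conjFun_le (j : ℕ) : conjFun p j ≤ n := le_trans (Finset.card_filter_le _ _) (by simp)

lemma conjFun_anti {j j' : ℕ} (h : j ≤ j') : conjFun p j' ≤ conjFun p j := by
  apply Finset.card_le_card
  intro x hx
  simp only [Finset.mem_filter, Finset.mem_range] at *
  omega

lemma B_strictAnti {i j : ℕ} (hij : i < j) (hj : j < n) : B p j < B p i := by
  have := partFun_anti p (le_of_lt hij)
  unfold B; omega

lemma sum_B : ∑ i ∈ range n, B p i = (∑ i ∈ range n, partFun p i) + ∑ i ∈ range n, i := by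
  unfold B
  rw [Finset.sum_add_distrib]
  congr 1
  exact Finset.sum_range_reflect (fun i => i) n

lemma C_lt_B {i j : ℕ} (hi : i < n) (hj : j < partFun p i) : C p j < B p i := by
  have h1 : i < conjFun p j := (lt_conjFun_iff p).mpr ⟨hi, hj⟩
  have h2 := conjFun_le p j
  unfold B C; omega

lemma hook_eq {i j : ℕ} (hi : i < n) (hj : j < partFun p i) :
    hook p (i, j) = B p i - C p j := by
  have h1 : i < conjFun p j := (lt_conjFun_iff p).mpr ⟨hi, hj⟩
  have h2 := conjFun_le p j
  unfold hook B C; simp only; omega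

lemma hook_pos {i j : ℕ} (hi : i < n) (hj : j < partFun p i) : 0 < hook p (i, j) := by
  have h1 : i < conjFun p j := (lt_conjFun_iff p).mpr ⟨hi, hj⟩
  unfold hook; simp only; omega

lemma C_strictMono {j j' : ℕ} (h : j < j') : C p j < C p j' := by
  have h1 := conjFun_anti p (le_of_lt h)
  have h2 := conjFun_le p j'
  have h3 := conjFun_le p j
  unfold C; omega

lemma C_ne_B {k j : ℕ} (hk : k < n) : B p k ≠ C p j := by
  have h2 := conjFun_le p j
  by_cases h : k < conjFun p j
  · have hj : j < partFun p k := ((lt_conjFun_iff p).mp h).2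
    unfold B C; omega
  · have hj : ¬ (j < partFun p k) := fun hc => h ((lt_conjFun_iff p).mpr ⟨hk, hc⟩)
    push_neg at hj
    unfold B C; omega


lemma cells_eq :
    cells p = (range n).biUnion fun i => (range (partFun p i)).image fun j => (i, j) := by
  ext ⟨i, j⟩
  simp only [cells, Finset.mem_filter, Finset.mem_product, Finset.mem_range,
    Finset.mem_biUnion, Finset.mem_image, Prod.mk.injEq]
  constructor
  · rintro ⟨⟨hi, hj⟩, hij⟩
    exact ⟨i, hi, j, hij, rfl, rfl⟩
  · rintro ⟨a, ha, b, hb, rfl, rfl⟩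
    exact ⟨⟨ha, lt_of_lt_of_le hb (partFun_le p a)⟩, hb⟩

lemma disj_aux : Set.PairwiseDisjoint ↑(range n)
    (fun i => (range (partFun p i)).image fun j => (i, j)) := by
  intro a _ b _ hab
  simp only [Finset.disjoint_left, Finset.mem_image]
  rintro ⟨x, y⟩ ⟨j, _, hj⟩ ⟨k, _, hk⟩
  injection hj with h1 h2
  injection hk with h3 h4
  exact hab (h1.trans h3.symm)

lemma prod_cells {M : Type*} [CommMonoid M] (f : ℕ × ℕ → M) :
    ∏ c ∈ cells p, f c = ∏ i ∈ range n, ∏ j ∈ range (partFun p i), f (i, j) := by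
  rw [cells_eq, Finset.prod_biUnion (disj_aux p)]
  exact Finset.prod_congr rfl fun i _ =>
    Finset.prod_image fun a _ b _ h => ((Prod.mk.injEq ..).mp h).2

lemma sum_cells {M : Type*} [AddCommMonoid M] (f : ℕ × ℕ → M) :
    ∑ c ∈ cells p, f c = ∑ i ∈ range n, ∑ j ∈ range (partFun p i), f (i, j) := by
  rw [cells_eq, Finset.sum_biUnion (disj_aux p)]
  exact Finset.sum_congr rfl fun i _ =>
    Finset.sum_image fun a _ b _ h => ((Prod.mk.injEq ..).mp h).2

lemma card_cells_filter (P : ℕ × ℕ → Prop) [DecidablePred P] :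
    ((cells p).filter P).card
      = ∑ i ∈ range n, ((range (partFun p i)).filter fun j => P (i, j)).card := by
  rw [Finset.card_filter, sum_cells]
  exact Finset.sum_congr rfl fun i _ => (Finset.card_filter _ _).symm

lemma le_sum_finset (S : Finset ℕ) : ∑ t ∈ range S.card, t ≤ ∑ x ∈ S, x := by
  suffices h : ∀ m (S : Finset ℕ), S.card = m → ∑ t ∈ range S.card, t ≤ ∑ x ∈ S, x from
    h S.card S rfl
  intro m
  induction m with
  | zero => intro S hc; rw [hc]; simp
  | succ m ih =>
    intro S hc
    have hne : S.Nonempty := Finset.card_pos.mp (by omega)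
    set M := S.max' hne with hM
    have hsub : S ⊆ range (M + 1) := fun x hx => mem_range.mpr (Nat.lt_succ_of_le (S.le_max' x hx))
    have hMm : m ≤ M := by
      have := Finset.card_le_card hsub
      simp only [Finset.card_range] at this
      omega
    have herase : (S.erase M).card = m := by
      rw [Finset.card_erase_of_mem (S.max'_mem hne)]; omega
    have hsum : ∑ x ∈ S, x = M + ∑ x ∈ S.erase M, x :=
      (Finset.add_sum_erase _ _ (S.max'_mem hne)).symm
    rw [hsum]
    have := ih (S.erase M) herase
    rw [herase] at this
    rw [hc]
    rw [Finset.sum_range_succ]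
    omega


lemma C_inj {j j' : ℕ} (h : C p j = C p j') : j = j' := by
  rcases lt_trichotomy j j' with hl | he | hl
  · exact absurd h (Nat.ne_of_lt (C_strictMono p hl))
  · exact he
  · exact absurd h.symm (Nat.ne_of_lt (C_strictMono p hl))

lemma B_inj {k k' : ℕ} (hk : k < n) (hk' : k' < n) (h : B p k = B p k') : k = k' := by
  rcases lt_trichotomy k k' with hl | he | hl
  · exact absurd h.symm (Nat.ne_of_lt (B_strictAnti p hl hk'))
  · exact he
  · exact absurd h (Nat.ne_of_lt (B_strictAnti p hl hk))

lemma keyRow (q : ℕ) (hq : 0 < q) {i : ℕ} (hi : i < n) :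
    ((range (partFun p i)).filter fun j => q ∣ hook p (i, j)).card
      + ((range n).filter fun k => B p k < B p i ∧ q ∣ B p i - B p k).card
    ≤ B p i / q := by
  set b := B p i with hb
  set F1 := (range (partFun p i)).filter (fun j => q ∣ hook p (i, j)) with hF1
  set F2 := (range n).filter (fun k => B p k < b ∧ q ∣ b - B p k) with hF2
  have hF1mem : ∀ j ∈ F1, C p j < b ∧ q ∣ b - C p j ∧ 0 < b - C p j := by
    intro j hj
    rw [hF1, Finset.mem_filter, Finset.mem_range] at hj
    obtain ⟨hjr, hdvd⟩ := hj
    have he := hook_eq p hi hjr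
    have hp := hook_pos p hi hjr
    rw [he] at hdvd hp
    exact ⟨C_lt_B p hi hjr, hdvd, hp⟩
  have hF2mem : ∀ k ∈ F2, k < n ∧ B p k < b ∧ q ∣ b - B p k ∧ 0 < b - B p k := by
    intro k hk
    rw [hF2, Finset.mem_filter, Finset.mem_range] at hk
    exact ⟨hk.1, hk.2.1, hk.2.2, by omega⟩
  set S1 := F1.image (fun j => (b - C p j) / q) with hS1
  set S2 := F2.image (fun k => (b - B p k) / q) with hS2
  have hcard1 : S1.card = F1.card := by
    apply Finset.card_image_of_injOn
    intro j hj j' hj' hdiv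
    obtain ⟨h1, h2, h3⟩ := hF1mem j hj
    obtain ⟨h1', h2', h3'⟩ := hF1mem j' hj'
    have e1 : b - C p j = q * ((b - C p j) / q) := (Nat.mul_div_cancel' h2).symm
    have e2 : b - C p j' = q * ((b - C p j') / q) := (Nat.mul_div_cancel' h2').symm
    have hdiv2 : (b - C p j) / q = (b - C p j') / q := hdiv
    rw [hdiv2] at e1
    apply C_inj p
    omega
  have hcard2 : S2.card = F2.card := by
    apply Finset.card_image_of_injOn
    intro k hk k' hk' hdiv
    obtain ⟨h0, h1, h2, h3⟩ := hF2mem k hk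
    obtain ⟨h0', h1', h2', h3'⟩ := hF2mem k' hk'
    have e1 : b - B p k = q * ((b - B p k) / q) := (Nat.mul_div_cancel' h2).symm
    have e2 : b - B p k' = q * ((b - B p k') / q) := (Nat.mul_div_cancel' h2').symm
    have hdiv2 : (b - B p k) / q = (b - B p k') / q := hdiv
    rw [hdiv2] at e1
    apply B_inj p h0 h0'
    omega
  have hsub : S1 ∪ S2 ⊆ Finset.Icc 1 (b / q) := by
    intro t ht
    rw [Finset.mem_union] at ht
    rw [Finset.mem_Icc]
    rcases ht with ht | ht
    · rw [hS1, Finset.mem_image] at ht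
      obtain ⟨j, hj, rfl⟩ := ht
      obtain ⟨h1, h2, h3⟩ := hF1mem j hj
      constructor
      · exact (Nat.one_le_div_iff hq).mpr (Nat.le_of_dvd h3 h2)
      · exact Nat.div_le_div_right (Nat.sub_le _ _)
    · rw [hS2, Finset.mem_image] at ht
      obtain ⟨k, hk, rfl⟩ := ht
      obtain ⟨h0, h1, h2, h3⟩ := hF2mem k hk
      constructor
      · exact (Nat.one_le_div_iff hq).mpr (Nat.le_of_dvd h3 h2)
      · exact Nat.div_le_div_right (Nat.sub_le _ _)
  have hdisj : Disjoint S1 S2 := by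
    rw [Finset.disjoint_left]
    intro t ht1 ht2
    rw [hS1, Finset.mem_image] at ht1
    rw [hS2, Finset.mem_image] at ht2
    obtain ⟨j, hj, hjt⟩ := ht1
    obtain ⟨k, hk, hkt⟩ := ht2
    obtain ⟨h1, h2, h3⟩ := hF1mem j hj
    obtain ⟨h0', h1', h2', h3'⟩ := hF2mem k hk
    have e1 : b - C p j = q * ((b - C p j) / q) := (Nat.mul_div_cancel' h2).symm
    have e2 : b - B p k = q * ((b - B p k) / q) := (Nat.mul_div_cancel' h2').symm
    have : B p k = C p j := by rw [hjt] at e1; rw [hkt] at e2; omega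
    exact C_ne_B p h0' this
  calc F1.card + F2.card = S1.card + S2.card := by rw [hcard1, hcard2]
  _ = (S1 ∪ S2).card := (Finset.card_union_of_disjoint hdisj).symm
  _ ≤ (Finset.Icc 1 (b / q)).card := Finset.card_le_card hsub
  _ = b / q := by simp


lemma keyCount (q r : ℕ) (hq : 0 < q) (hr : r < q) :
    ((cells p).filter fun c => q ∣ hook p c).card
      ≤ ((range n).filter fun i => B p i % q = r).card := by
  classical
  set s := ((range n).filter fun i => B p i % q = r).card with hs
  set inv : ℕ → ℕ :=
    fun i => ((range n).filter fun k => B p k < B p i ∧ q ∣ B p i - B p k).card with hinv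
  set φ : ℕ → ℕ := fun i => B p i % q + q * inv i with hφ
  set Nf : ℕ → ℕ :=
    fun i => ((range (partFun p i)).filter fun j => q ∣ hook p (i, j)).card with hNf
  -- inv is strictly monotone along same-residue comparisons
  have inv_lt : ∀ i i', i < n → i' < n → B p i' < B p i → B p i % q = B p i' % q →
      inv i' < inv i := by
    intro i i' hi hi' hBB hmod
    have hdvd : q ∣ B p i - B p i' :=
      Nat.dvd_of_mod_eq_zero (Nat.sub_mod_eq_zero_of_mod_eq hmod)
    have hsub : insert i' ((range n).filter fun k => B p k < B p i' ∧ q ∣ B p i' - B p k)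
        ⊆ (range n).filter fun k => B p k < B p i ∧ q ∣ B p i - B p k := by
      intro k hk
      rw [Finset.mem_insert] at hk
      rw [Finset.mem_filter, Finset.mem_range]
      rcases hk with rfl | hk
      · exact ⟨hi', hBB, hdvd⟩
      · rw [Finset.mem_filter, Finset.mem_range] at hk
        obtain ⟨hk1, hk2, hk3⟩ := hk
        obtain ⟨u, hu⟩ := hk3
        obtain ⟨w, hw⟩ := hdvd
        refine ⟨hk1, by omega, ⟨u + w, ?_⟩⟩
        have hq2 : q * (u + w) = q * u + q * w := by ring
        omega
    have hnotmem : i' ∉ (range n).filter fun k => B p k < B p i' ∧ q ∣ B p i' - B p k := by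
      simp
    have := Finset.card_le_card hsub
    rw [Finset.card_insert_of_notMem hnotmem] at this
    simp only [hinv]
    omega
  -- φ is injective on range n
  have hφinj : Set.InjOn φ (range n) := by
    intro i hi i' hi' heq
    simp only [Finset.coe_range, Set.mem_Iio] at hi hi'
    have h1 : φ i % q = B p i % q := by
      simp only [hφ]
      rw [Nat.add_mul_mod_self_left, Nat.mod_mod_of_dvd _ dvd_rfl]
    have h1' : φ i' % q = B p i' % q := by
      simp only [hφ]
      rw [Nat.add_mul_mod_self_left, Nat.mod_mod_of_dvd _ dvd_rfl]
    have hmod : B p i % q = B p i' % q := by rw [← h1, ← h1', heq]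
    have hinveq : inv i = inv i' := by
      apply Nat.eq_of_mul_eq_mul_left hq
      have e := heq
      simp only [hφ] at e
      omega
    by_contra hne
    rcases lt_trichotomy i i' with hl | hee | hl
    · have := inv_lt i i' hi hi' (B_strictAnti p hl hi') hmod
      omega
    · exact hne hee
    · have := inv_lt i' i hi' hi (B_strictAnti p hl hi) hmod.symm
      omega
  -- the extra element
  set e := r + q * s with he
  have hemod : e % q = r := by rw [he, Nat.add_mul_mod_self_left, Nat.mod_eq_of_lt hr]
  have hT : e ∉ (range n).image φ := by
    intro hmem
    rw [Finset.mem_image] at hmem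
    obtain ⟨i, hi, hφi⟩ := hmem
    rw [Finset.mem_range] at hi
    have h1 : φ i % q = B p i % q := by
      simp only [hφ]
      rw [Nat.add_mul_mod_self_left, Nat.mod_mod_of_dvd _ dvd_rfl]
    have hBr : B p i % q = r := by rw [← h1, hφi, hemod]
    have hinvs : inv i = s := by
      apply Nat.eq_of_mul_eq_mul_left hq
      have e2 := hφi
      simp only [hφ, he] at e2
      omega
    have hsub : insert i ((range n).filter fun k => B p k < B p i ∧ q ∣ B p i - B p k)
        ⊆ (range n).filter fun k => B p k % q = r := by
      intro k hk
      rw [Finset.mem_insert] at hk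
      rw [Finset.mem_filter, Finset.mem_range]
      rcases hk with rfl | hk
      · exact ⟨hi, hBr⟩
      · rw [Finset.mem_filter, Finset.mem_range] at hk
        obtain ⟨hk1, hk2, hk3⟩ := hk
        have hmk : B p k % q = B p i % q := (Nat.modEq_iff_dvd' (le_of_lt hk2)).mpr hk3
        exact ⟨hk1, hmk.trans hBr⟩
    have hnm : i ∉ (range n).filter fun k => B p k < B p i ∧ q ∣ B p i - B p k := by simp
    have hc := Finset.card_le_card hsub
    rw [Finset.card_insert_of_notMem hnm] at hc
    have hfold : ((range n).filter fun k => B p k < B p i ∧ q ∣ B p i - B p k).card = inv i := rfl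
    have hsfold : ((range n).filter fun k => B p k % q = r).card = s := rfl
    omega
  -- sum over the image plus the extra element
  have hsumT : ∑ t ∈ range (n + 1), t ≤ e + ∑ i ∈ range n, φ i := by
    have hcard : (insert e ((range n).image φ)).card = n + 1 := by
      rw [Finset.card_insert_of_notMem hT, Finset.card_image_of_injOn hφinj,
        Finset.card_range]
    have hsum2 : ∑ x ∈ insert e ((range n).image φ), x = e + ∑ i ∈ range n, φ i := by
      rw [Finset.sum_insert hT, Finset.sum_image
        (fun x hx y hy hxy => hφinj (by simpa using hx) (by simpa using hy) hxy)]
    have := le_sum_finset (insert e ((range n).image φ))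
    rw [hcard, hsum2] at this
    exact this
  -- per-row bound
  have step1 : ∀ i ∈ range n, q * Nf i + φ i ≤ B p i := by
    intro i hi
    rw [Finset.mem_range] at hi
    have hk : Nf i + inv i ≤ B p i / q := keyRow p q hq hi
    have hdm := Nat.div_add_mod (B p i) q
    have hmul := Nat.mul_le_mul_left q hk
    calc q * Nf i + φ i = q * (Nf i + inv i) + B p i % q := by simp only [hφ]; ring
    _ ≤ q * (B p i / q) + B p i % q := Nat.add_le_add_right hmul _
    _ = B p i := hdm
  have step2 : q * ((cells p).filter fun c => q ∣ hook p c).card + ∑ i ∈ range n, φ i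
      ≤ ∑ i ∈ range n, B p i := by
    rw [card_cells_filter p (fun c => q ∣ hook p c), Finset.mul_sum, ← Finset.sum_add_distrib]
    exact Finset.sum_le_sum step1
  have hBsum : ∑ i ∈ range n, B p i = n + ∑ i ∈ range n, i := by
    rw [sum_B, sum_partFun]
  have hrange : ∑ t ∈ range (n + 1), t = (∑ t ∈ range n, t) + n := Finset.sum_range_succ _ _
  have hfin : q * ((cells p).filter fun c => q ∣ hook p c).card ≤ e := by omega
  have hlt : q * ((cells p).filter fun c => q ∣ hook p c).card < q * (s + 1) := by
    have hqs : q * (s + 1) = q * s + q := by ring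
    omega
  exact Nat.lt_succ_iff.mp (Nat.lt_of_mul_lt_mul_left hlt)


end Stmt7

open Stmt7 in
/-- For `λ ⊢ n` and every integer `v`,
`A_λ(v) = (∏_{i=1}^n (v + λ_i + n - i)) / H_λ` is an integer. -/
theorem stmt7 (n : ℕ) (p : Nat.Partition n) (v : ℤ) :
    (∏ c ∈ cells p, (hook p c : ℤ)) ∣
      ∏ i ∈ Finset.range n, (v + (partFun p i : ℤ) + (n : ℤ) - 1 - (i : ℤ)) := by
  classical
  have hprod : ∏ i ∈ Finset.range n, (v + (partFun p i : ℤ) + (n : ℤ) - 1 - (i : ℤ))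
      = ∏ i ∈ Finset.range n, (v + (B p i : ℤ)) := by
    apply Finset.prod_congr rfl
    intro i hi
    rw [Finset.mem_range] at hi
    have hBi : ((B p i : ℤ)) = (partFun p i : ℤ) + (n : ℤ) - 1 - (i : ℤ) := by
      unfold Stmt7.B
      push_cast
      omega
    omega
  rw [hprod]
  set P := ∏ i ∈ Finset.range n, (v + (B p i : ℤ)) with hP
  by_cases hP0 : P = 0
  · rw [hP0]; exact dvd_zero _
  set H := ∏ c ∈ cells p, hook p c with hH
  have hcast : (∏ c ∈ cells p, (hook p c : ℤ)) = (H : ℤ) := by rw [hH, Nat.cast_prod]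
  rw [hcast]
  have hcellmem : ∀ c ∈ cells p, c.1 < n ∧ c.2 < partFun p c.1 := by
    intro c hc
    unfold cells at hc
    rw [Finset.mem_filter, Finset.mem_product, Finset.mem_range, Finset.mem_range] at hc
    exact ⟨hc.1.1, hc.2⟩
  have hhookpos : ∀ c ∈ cells p, 0 < hook p c := by
    intro c hc
    obtain ⟨h1, h2⟩ := hcellmem c hc
    exact Stmt7.hook_pos p h1 h2
  have hHne : H ≠ 0 := by
    rw [hH]
    exact (Finset.prod_pos hhookpos).ne'
  rw [Int.natCast_dvd]
  set m := P.natAbs with hm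
  have hmne : m ≠ 0 := fun h => hP0 (Int.natAbs_eq_zero.mp h)
  have hmprod : m = ∏ i ∈ Finset.range n, (v + (B p i : ℤ)).natAbs := by
    rw [hm, hP]; exact map_prod Int.natAbsHom _ _
  have hfacne : ∀ i ∈ Finset.range n, (v + (B p i : ℤ)).natAbs ≠ 0 := by
    intro i hi h0
    exact hP0 (by rw [hP]; exact Finset.prod_eq_zero hi (Int.natAbs_eq_zero.mp h0))
  rw [← Nat.factorization_le_iff_dvd hHne hmne, Finsupp.le_def]
  intro a
  by_cases ha : a.Prime
  case neg => simp [Nat.factorization_eq_zero_of_not_prime _ ha]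
  set K := H + m with hK
  have hcardfact : ∀ x : ℕ, x ≠ 0 → x ≤ K →
      x.factorization a = ((Finset.Icc 1 K).filter fun k => a ^ k ∣ x).card := by
    intro x hx hxK
    rw [Nat.factorization_eq_card_pow_dvd x ha,
      Nat.Ico_filter_pow_dvd_eq ha hx
        (hxK.trans ((Nat.lt_two_pow_self (n := K)).le.trans (Nat.pow_le_pow_left ha.two_le K)))]
  have hHfact : H.factorization a
      = ∑ k ∈ Finset.Icc 1 K, ((cells p).filter fun c => a ^ k ∣ hook p c).card := by
    rw [hH, Nat.factorization_prod (fun c hc => (hhookpos c hc).ne'), Finset.sum_apply']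
    rw [Finset.sum_congr rfl (fun c hc => hcardfact (hook p c) (hhookpos c hc).ne'
      (le_trans (Nat.le_of_dvd (Nat.pos_of_ne_zero hHne) (hH ▸ Finset.dvd_prod_of_mem _ hc))
        (by omega)))]
    simp_rw [Finset.card_filter]
    exact Finset.sum_comm
  have hmfact : m.factorization a
      = ∑ k ∈ Finset.Icc 1 K, ((Finset.range n).filter
          fun i => a ^ k ∣ (v + (B p i : ℤ)).natAbs).card := by
    rw [hmprod, Nat.factorization_prod hfacne, Finset.sum_apply']
    rw [Finset.sum_congr rfl (fun i hi => hcardfact _ (hfacne i hi)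
      (le_trans (Nat.le_of_dvd (Nat.pos_of_ne_zero hmne)
        (hmprod ▸ Finset.dvd_prod_of_mem _ hi)) (by omega)))]
    simp_rw [Finset.card_filter]
    exact Finset.sum_comm
  rw [hHfact, hmfact]
  apply Finset.sum_le_sum
  intro k hk
  set q := a ^ k with hq
  have hq0 : 0 < q := pow_pos ha.pos k
  set r := ((-v) % (q : ℤ)).toNat with hr
  have hnn : 0 ≤ (-v) % (q : ℤ) := Int.emod_nonneg _ (by exact_mod_cast hq0.ne')
  have hlt : (-v) % (q : ℤ) < (q : ℤ) := Int.emod_lt_of_pos _ (by exact_mod_cast hq0)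
  have hrq : r < q := by omega
  have hiff : ∀ i, (B p i % q = r) ↔ (q ∣ (v + (B p i : ℤ)).natAbs) := by
    intro i
    rw [← Int.natCast_dvd]
    calc B p i % q = r ↔ ((B p i % q : ℕ) : ℤ) = ((r : ℕ) : ℤ) := Nat.cast_inj.symm
    _ ↔ (B p i : ℤ) % (q : ℤ) = (-v) % (q : ℤ) := by
        rw [Int.natCast_mod, Int.toNat_of_nonneg hnn]
    _ ↔ ((B p i : ℤ) - (-v)) % (q : ℤ) = 0 := Int.emod_eq_emod_iff_emod_sub_eq_zero
    _ ↔ (q : ℤ) ∣ (B p i : ℤ) - (-v) :=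
        ⟨Int.dvd_of_emod_eq_zero, Int.emod_eq_zero_of_dvd⟩
    _ ↔ (q : ℤ) ∣ v + (B p i : ℤ) := by rw [sub_neg_eq_add, add_comm]
  calc ((cells p).filter fun c => q ∣ hook p c).card
      ≤ ((range n).filter fun i => B p i % q = r).card := Stmt7.keyCount p q r hq0 hrq
  _ = ((range n).filter fun i => q ∣ (v + (B p i : ℤ)).natAbs).card := by
      rw [Finset.filter_congr (fun i _ => hiff i)]
end

section
/- Let λ = (λ_1,…,λ_n) be a partition of n (with trailing zeros so that it has exactly n parts). Then the following two multisets are equal: {h_u : u ∈ λ} ∪ {λ_i − λ_j − i + j : 1 ≤ i < j ≤ n} and {n + c_u : u ∈ λ} ∪ {1 with multiplicity n−1, 2 with multiplicity n−2, …, n−1 with multiplicity 1}, where ∪ denotes multiset union. -/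
open Finset Polynomial

-- basic lemmas about partFun / conjFun
lemma partFun_anti {n : ℕ} (p : Nat.Partition n) {i j : ℕ} (h : i ≤ j) :
    partFun p j ≤ partFun p i := by
  unfold partFun
  by_cases hj : j < (p.parts.sort (· ≥ ·)).length
  · have hi : i < (p.parts.sort (· ≥ ·)).length := lt_of_le_of_lt h hj
    rw [List.getD_eq_getElem _ _ hj, List.getD_eq_getElem _ _ hi]
    rcases eq_or_lt_of_le h with rfl | hlt
    · exact le_refl _
    · exact (Multiset.pairwise_sort p.parts (· ≥ ·)).rel_get_of_lt
        (show (⟨i, hi⟩ : Fin _) < ⟨j, hj⟩ from hlt)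
  · rw [List.getD_eq_default _ _ (not_lt.mp hj)]
    exact Nat.zero_le _

lemma partFun_le {n : ℕ} (p : Nat.Partition n) (i : ℕ) : partFun p i ≤ n := by
  unfold partFun
  by_cases hi : i < (p.parts.sort (· ≥ ·)).length
  · rw [List.getD_eq_getElem _ _ hi]
    have hmem : (p.parts.sort (· ≥ ·))[i] ∈ p.parts := by
      rw [← Multiset.mem_sort (· ≥ ·)]
      exact List.getElem_mem hi
    calc (p.parts.sort (· ≥ ·))[i] ≤ p.parts.sum :=
          Multiset.single_le_sum (fun x _ => Nat.zero_le x) _ hmem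
      _ = n := p.parts_sum
  · rw [List.getD_eq_default _ _ (not_lt.mp hi)]; exact Nat.zero_le _

lemma conjFun_le {n : ℕ} (p : Nat.Partition n) (j : ℕ) : conjFun p j ≤ n := by
  unfold conjFun
  exact le_trans (Finset.card_filter_le _ _) (by simp)

lemma conjFun_anti {n : ℕ} (p : Nat.Partition n) {j j' : ℕ} (h : j ≤ j') :
    conjFun p j' ≤ conjFun p j := by
  unfold conjFun
  apply Finset.card_le_card
  intro m hm
  simp only [Finset.mem_filter] at hm ⊢
  exact ⟨hm.1, lt_of_le_of_lt h hm.2⟩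

lemma lt_conj_iff {n : ℕ} (p : Nat.Partition n) {j k : ℕ} (hk : k < n) :
    j < partFun p k ↔ k < conjFun p j := by
  constructor
  · intro h
    have hsub : Finset.range (k + 1) ⊆ (Finset.range n).filter (fun m => j < partFun p m) := by
      intro m hm
      simp only [Finset.mem_range, Nat.lt_succ_iff] at hm
      simp only [Finset.mem_filter, Finset.mem_range]
      exact ⟨lt_of_le_of_lt hm hk, lt_of_lt_of_le h (partFun_anti p hm)⟩
    have := Finset.card_le_card hsub
    simpa [conjFun, Nat.succ_le_iff] using this
  · intro h
    by_contra hc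
    push_neg at hc
    have hsub : (Finset.range n).filter (fun m => j < partFun p m) ⊆ Finset.range k := by
      intro m hm
      simp only [Finset.mem_filter, Finset.mem_range] at hm ⊢
      by_contra hmk
      push_neg at hmk
      exact absurd hm.2 (not_lt.mpr (le_trans (partFun_anti p hmk) hc))
    have := Finset.card_le_card hsub
    simp only [Finset.card_range] at this
    simp only [conjFun] at h
    omega

lemma hook_cast {n : ℕ} (p : Nat.Partition n) {i j : ℕ} (hi : i < n) (hj : j < partFun p i) :
    (hook p (i, j) : ℤ) =
      ((partFun p i : ℤ) + n - 1 - i) - ((n : ℤ) + j - conjFun p j) := by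
  have h2 : i < conjFun p j := (lt_conj_iff p hi).mp hj
  have h3 : conjFun p j ≤ n := conjFun_le p j
  have hh : hook p (i, j) = (partFun p i - j) + (conjFun p j - i) - 1 := rfl
  omega

lemma row_eq {n : ℕ} (p : Nat.Partition n) {i : ℕ} (hi : i < n) :
    (Multiset.range (partFun p i)).map (fun j => (hook p (i, j) : ℤ)) +
      ((Finset.range n).filter (fun k => i < k)).val.map
        (fun k => (partFun p i : ℤ) - (partFun p k : ℤ) - (i : ℤ) + (k : ℤ))
    = (Multiset.range (partFun p i)).map (fun j : ℕ => (n : ℤ) + ((j : ℤ) - (i : ℤ))) +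
      (Multiset.range (n - 1 - i)).map (fun m : ℕ => (m : ℤ) + 1) := by
  have hookA : ∀ j, j < partFun p i → (hook p (i, j) : ℤ) =
      ((partFun p i : ℤ) + n - 1 - i) - ((n : ℤ) + j - conjFun p j) :=
    fun j hj => hook_cast p hi hj
  have hbcard : Multiset.card ((Finset.range n).filter fun k => i < k).val = n - 1 - i := by
    have h : (Finset.range n).filter (fun k => i < k) = Finset.Ioo i n := by
      ext k; simp only [Finset.mem_filter, Finset.mem_range, Finset.mem_Ioo]; omega
    have := Nat.card_Ioo i n
    rw [h]
    simp only [Finset.card] at this ⊢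
    omega
  have hT : (Multiset.range (partFun p i)).map (fun j : ℕ => (n : ℤ) + ((j : ℤ) - (i : ℤ))) +
      (Multiset.range (n - 1 - i)).map (fun m : ℕ => (m : ℤ) + 1)
      = (Multiset.range (n - 1 - i + partFun p i)).map (fun v : ℕ => (v : ℤ) + 1) := by
    have hsplit : Multiset.range (n - 1 - i + partFun p i)
        = Multiset.range (n - 1 - i)
          + (Multiset.range (partFun p i)).map (fun j => n - 1 - i + j) := by
      have h := List.range_add (n := n - 1 - i) (m := partFun p i)
      calc Multiset.range (n - 1 - i + partFun p i)
          = ((List.range (n - 1 - i + partFun p i) : List ℕ) : Multiset ℕ) := rfl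
        _ = _ := by rw [h]; simp [Multiset.range]
    rw [hsplit, Multiset.map_add, Multiset.map_map, add_comm]
    congr 1
    apply Multiset.map_congr rfl
    intro j hj
    simp only [Function.comp_apply]
    omega
  rw [hT]
  have hnd : ((Multiset.range (partFun p i)).map (fun j => (hook p (i, j) : ℤ)) +
      ((Finset.range n).filter (fun k => i < k)).val.map
        (fun k => (partFun p i : ℤ) - (partFun p k : ℤ) - (i : ℤ) + (k : ℤ))).Nodup := by
    rw [Multiset.nodup_add]
    refine ⟨?_, ?_, ?_⟩
    · apply Multiset.Nodup.map_on _ (Multiset.nodup_range _)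
      intro x hx y hy hxy
      rw [Multiset.mem_range] at hx hy
      rw [hookA x hx, hookA y hy] at hxy
      rcases lt_trichotomy x y with h | h | h
      · have := conjFun_anti p h.le; omega
      · exact h
      · have := conjFun_anti p h.le; omega
    · apply Multiset.Nodup.map_on _ ((Finset.range n).filter fun k => i < k).nodup
      intro x hx y hy hxy
      simp only [Finset.mem_val, Finset.mem_filter, Finset.mem_range] at hx hy
      rcases lt_trichotomy x y with h | h | h
      · have := partFun_anti p h.le; omega
      · exact h
      · have := partFun_anti p h.le; omega
    · rw [Multiset.disjoint_left]
      intro a haA haB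
      simp only [Multiset.mem_map, Multiset.mem_range, Finset.mem_val, Finset.mem_filter,
        Finset.mem_range] at haA haB
      obtain ⟨j, hj, rfl⟩ := haA
      obtain ⟨k, ⟨hkn, hik⟩, hk⟩ := haB
      rw [hookA j hj] at hk
      have hc1 := conjFun_le p j
      by_cases hcase : j < partFun p k
      · have := (lt_conj_iff p hkn).mp hcase; omega
      · push_neg at hcase
        have h5 : conjFun p j ≤ k :=
          not_lt.mp fun hco => absurd (( lt_conj_iff p hkn).mpr hco) (not_lt.mpr hcase)
        omega
  refine Multiset.eq_of_le_of_card_le ((Multiset.le_iff_subset hnd).mpr ?_) ?_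
  · intro x hx
    rw [Multiset.mem_add] at hx
    simp only [Multiset.mem_map, Multiset.mem_range, Finset.mem_val, Finset.mem_filter,
      Finset.mem_range] at hx ⊢
    rcases hx with ⟨j, hj, rfl⟩ | ⟨k, ⟨hkn, hik⟩, rfl⟩
    · rw [hookA j hj]
      have h2 := (lt_conj_iff p hi).mp hj
      have h3 := conjFun_le p j
      refine ⟨((((partFun p i : ℤ) + n - 1 - i) - ((n : ℤ) + j - conjFun p j)) - 1).toNat,
        ?_, ?_⟩ <;> omega
    · have h1 := partFun_anti p (le_of_lt hik)
      refine ⟨((partFun p i : ℤ) - (partFun p k : ℤ) - (i : ℤ) + (k : ℤ) - 1).toNat,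
        ?_, ?_⟩ <;> omega
  · rw [Multiset.card_add, Multiset.card_map, Multiset.card_map, Multiset.card_map,
      Multiset.card_range, Multiset.card_range, hbcard]
    omega

lemma filter_bind' {α β : Type*} (s : Multiset α) (f : α → Multiset β) (q : β → Prop)
    [DecidablePred q] : (s.bind f).filter q = s.bind fun a => (f a).filter q :=
  Multiset.induction_on s (by simp) (by intro a s ih; simp [ih])


/-- For `λ ⊢ n`, the multiset equality
`{h_u : u ∈ λ} ∪ {λ_i - λ_j - i + j : 1 ≤ i < j ≤ n}`
`= {n + c_u : u ∈ λ} ∪ {1^{n-1}, 2^{n-2}, …, (n-1)^1}` holds. -/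
theorem stmt12 (n : ℕ) (p : Nat.Partition n) :
    (cells p).val.map (fun c => (hook p c : ℤ)) +
      (((Finset.range n ×ˢ Finset.range n).filter fun q => q.1 < q.2).val.map
        fun q => (partFun p q.1 : ℤ) - (partFun p q.2 : ℤ) - (q.1 : ℤ) + (q.2 : ℤ))
    = (cells p).val.map (fun c => (n : ℤ) + cellContent c) +
      (Finset.range n).val.bind
        (fun l => Multiset.replicate (n - 1 - l) ((l : ℤ) + 1)) := by
  classical
  have hprod : ((Finset.range n ×ˢ Finset.range n) : Finset (ℕ × ℕ)).val
      = (Finset.range n).val.bind (fun i => (Finset.range n).val.map (Prod.mk i)) := by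
    rw [Finset.product_val]; rfl
  have hcellsval : (cells p).val
      = (Finset.range n).val.bind
          (fun i => (Multiset.range (partFun p i)).map (Prod.mk i)) := by
    unfold cells
    rw [Finset.filter_val, hprod, filter_bind']
    apply Multiset.bind_congr
    intro i _
    rw [Multiset.filter_map]
    congr 1
    have h1 : (Finset.range n).filter (fun j => j < partFun p i)
        = Finset.range (partFun p i) := by
      ext j; simp only [Finset.mem_filter, Finset.mem_range]
      have := partFun_le p i; omega
    calc (Finset.range n).val.filter ((fun c : ℕ × ℕ => c.2 < partFun p c.1) ∘ Prod.mk i)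
        = ((Finset.range n).filter (fun j => j < partFun p i)).val := by
          rw [Finset.filter_val]
          exact Multiset.filter_congr (fun x _ => Iff.rfl)
      _ = Multiset.range (partFun p i) := by rw [h1]; exact Finset.range_val _
  have hpairs : (((Finset.range n ×ˢ Finset.range n)).filter (fun q : ℕ × ℕ => q.1 < q.2)).val
      = (Finset.range n).val.bind
          (fun i => (((Finset.range n).filter (fun k => i < k)).val).map (Prod.mk i)) := by
    rw [Finset.filter_val, hprod, filter_bind']
    apply Multiset.bind_congr
    intro i _
    rw [Multiset.filter_map]
    congr 1
  have hstair : (Finset.range n).val.bind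
        (fun l => Multiset.replicate (n - 1 - l) ((l : ℤ) + 1))
      = (Finset.range n).val.bind
          (fun i => (Multiset.range (n - 1 - i)).map (fun m : ℕ => (m : ℤ) + 1)) := by
    have hb : ∀ f : ℕ → Multiset ℤ,
        (Finset.range n).val.bind f = ∑ l ∈ Finset.range n, f l := fun f => rfl
    rw [hb, hb]
    have h1 : ∀ l, Multiset.replicate (n - 1 - l) ((l : ℤ) + 1)
        = ∑ t ∈ Finset.range (n - 1 - l), ({((l : ℤ) + 1)} : Multiset ℤ) := by
      intro l
      rw [Finset.sum_const, Finset.card_range]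
      induction (n - 1 - l) with
      | zero => simp
      | succ k ih => rw [Multiset.replicate_succ, succ_nsmul, ih]; simp [Multiset.singleton_add, add_comm]
    have h2 : ∀ i, (Multiset.range (n - 1 - i)).map (fun m : ℕ => (m : ℤ) + 1)
        = ∑ m ∈ Finset.range (n - 1 - i), ({((m : ℤ) + 1)} : Multiset ℤ) := by
      intro i
      rw [← Multiset.bind_singleton (f := fun m : ℕ => (m : ℤ) + 1) (s := Multiset.range (n - 1 - i))]
      rfl
    simp_rw [h1, h2]
    exact Finset.sum_comm' (fun x y => by simp only [Finset.mem_range]; omega)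
  rw [hcellsval, hpairs, hstair, Multiset.map_bind, Multiset.map_bind, Multiset.map_bind,
    ← Multiset.bind_add, ← Multiset.bind_add]
  apply Multiset.bind_congr
  intro i hi
  have hin : i < n := by
    rw [show (Finset.range n).val = Multiset.range n from rfl, Multiset.mem_range] at hi
    exact hi
  simp only [Multiset.map_map, Function.comp_def]
  exact row_eq p hin
end

section
/- For every partition μ = (μ_1,…,μ_k) there exists a polynomial P ∈ ℚ[x] such that for all n ≥ 1, Π_{h=1}^k e_{μ_h}(D_n) = P(n), where D_n is the multiset containing i with multiplicity n − i for each 1 ≤ i ≤ n − 1 (so D_n = {1^{n−1}, 2^{n−2}, …, (n−1)^1}). (Consequently, F(1^{n−1}, 2^{n−2}, …, n−1) is a polynomial function of n for every symmetric function F over ℚ.) -/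
open Finset Polynomial

/-- The multiset `D_n = {1^{n-1}, 2^{n-2}, …, (n-1)^1}` in which `i` occurs with
multiplicity `n - i`. -/
def Dn (n : ℕ) : Multiset ℚ :=
  (Finset.range n).val.bind fun l => Multiset.replicate (n - 1 - l) ((l : ℚ) + 1)

def IsPF (f : ℕ → ℚ) : Prop := ∃ P : Polynomial ℚ, ∀ n : ℕ, f n = P.eval (n : ℚ)

lemma IsPF.const (c : ℚ) : IsPF (fun _ => c) := ⟨C c, by simp⟩

lemma IsPF.mul {f g : ℕ → ℚ} (hf : IsPF f) (hg : IsPF g) : IsPF (fun n => f n * g n) := by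
  obtain ⟨P, hP⟩ := hf; obtain ⟨Q, hQ⟩ := hg
  exact ⟨P * Q, fun n => by simp [hP n, hQ n]⟩

lemma IsPF.add {f g : ℕ → ℚ} (hf : IsPF f) (hg : IsPF g) : IsPF (fun n => f n + g n) := by
  obtain ⟨P, hP⟩ := hf; obtain ⟨Q, hQ⟩ := hg
  exact ⟨P + Q, fun n => by simp [hP n, hQ n]⟩

lemma IsPF.finsetSum {ι : Type*} (t : Finset ι) (f : ι → ℕ → ℚ)
    (h : ∀ i ∈ t, IsPF (f i)) : IsPF (fun n => ∑ i ∈ t, f i n) := by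
  classical
  induction t using Finset.induction_on with
  | empty => exact ⟨0, by simp⟩
  | @insert a s hx ih =>
    simp only [Finset.sum_insert hx]
    exact (h a (by simp)).add (ih fun i hi => h i (by simp [hi]))

lemma IsPF.finsetProd {ι : Type*} (t : Finset ι) (f : ι → ℕ → ℚ)
    (h : ∀ i ∈ t, IsPF (f i)) : IsPF (fun n => ∏ i ∈ t, f i n) := by
  classical
  induction t using Finset.induction_on with
  | empty => exact ⟨1, by simp⟩
  | @insert a s hx ih =>
    simp only [Finset.prod_insert hx]
    exact (h a (by simp)).mul (ih fun i hi => h i (by simp [hi]))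


open MvPolynomial in
lemma multiset_newton (s : Multiset ℚ) (k : ℕ) :
    (k : ℚ) * s.esymm k = (-1) ^ (k + 1) *
      ∑ a ∈ (Finset.HasAntidiagonal.antidiagonal k).filter (fun a => a.1 < k),
        (-1 : ℚ) ^ a.1 * s.esymm a.1 * (s.map (· ^ a.2)).sum := by
  classical
  set N := s.toList.length with hN
  set f : Fin N → ℚ := fun i => s.toList.get i with hf
  have huniv : (Finset.univ.val.map f) = s := by
    rw [Fin.univ_val_map]
    simp only [hf, List.ofFn_get]
    rw [show (List.ofFn fun i => s.toList.get i) = s.toList from List.ofFn_get _]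
    exact s.coe_toList
  have hps : ∀ m, aeval f (psum (Fin N) ℚ m) = (s.map (· ^ m)).sum := by
    intro m
    rw [psum, map_sum]
    simp only [map_pow, MvPolynomial.aeval_X]
    rw [← huniv, Multiset.map_map, Finset.sum_eq_multiset_sum]
    rfl
  have h := congrArg (MvPolynomial.aeval (R := ℚ) f) (mul_esymm_eq_sum (Fin N) ℚ k)
  simp only [map_mul, map_natCast, map_sum, map_pow, map_neg, map_one,
    aeval_esymm_eq_multiset_esymm, huniv, hps] at h
  exact h


lemma isPF_T (j : ℕ) : ∃ P : Polynomial ℚ, ∀ n : ℕ,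
    ∑ l ∈ Finset.range n, ((l : ℚ) + 1) ^ j = P.eval (n : ℚ) := by
  refine ⟨(∑ i ∈ Finset.range (j + 1),
      C (_root_.bernoulli i * ((j + 1).choose i) / (j + 1)) * (X + 1) ^ (j + 1 - i)) - C ((0 : ℚ) ^ j),
    fun n => ?_⟩
  have h := sum_range_pow (n + 1) j
  rw [Finset.sum_range_succ'] at h
  push_cast at h
  have h2 : ∑ l ∈ Finset.range n, ((l : ℚ) + 1) ^ j
      = (∑ i ∈ Finset.range (j + 1),
          _root_.bernoulli i * ((j + 1).choose i) * ((n : ℚ) + 1) ^ (j + 1 - i) / (j + 1)) - (0 : ℚ) ^ j := by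
    rw [← h]; ring
  rw [h2]
  simp only [eval_sub, eval_finset_sum, eval_mul, eval_C, eval_pow, eval_add, eval_X, eval_one]
  rw [sub_left_inj]
  exact Finset.sum_congr rfl fun i _ => by rw [div_mul_eq_mul_div]

lemma Dn_psum (n : ℕ) (j : ℕ) :
    ((Dn n).map (· ^ j)).sum
      = ∑ l ∈ Finset.range n, ((n - 1 - l : ℕ) : ℚ) * ((l : ℚ) + 1) ^ j := by
  rw [Dn, Multiset.map_bind, Multiset.sum_bind, Finset.sum_eq_multiset_sum]
  simp only [Multiset.map_replicate, Multiset.sum_replicate, nsmul_eq_mul]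

lemma isPF_psum (j : ℕ) : ∃ P : Polynomial ℚ, ∀ n : ℕ,
    ((Dn n).map (· ^ j)).sum = P.eval (n : ℚ) := by
  have key : ∀ n : ℕ, ((Dn n).map (· ^ j)).sum
      = (n : ℚ) * (∑ l ∈ Finset.range n, ((l : ℚ) + 1) ^ j)
        - ∑ l ∈ Finset.range n, ((l : ℚ) + 1) ^ (j + 1) := by
    intro n
    rw [Dn_psum, Finset.mul_sum, ← Finset.sum_sub_distrib]
    refine Finset.sum_congr rfl fun l hl => ?_
    have hl' : l < n := Finset.mem_range.mp hl
    have hc : ((n - 1 - l : ℕ) : ℚ) = (n : ℚ) - 1 - (l : ℚ) := by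
      rw [Nat.sub_sub, Nat.cast_sub (by omega)]
      push_cast; ring
    rw [hc]; ring
  obtain ⟨P1, h1⟩ := isPF_T j
  obtain ⟨P2, h2⟩ := isPF_T (j + 1)
  exact ⟨X * P1 - P2, fun n => by rw [key n, h1 n, h2 n, eval_sub, eval_mul, eval_X]⟩

lemma isPF_esymm (k : ℕ) : IsPF (fun n => (Dn n).esymm k) := by
  induction k using Nat.strong_induction_on with
  | _ k ih =>
    rcases Nat.eq_zero_or_pos k with rfl | hk
    · refine ⟨1, fun n => ?_⟩
      show (Dn n).esymm 0 = eval (n : ℚ) 1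
      simp [Multiset.esymm]
    · have hkQ : (k : ℚ) ≠ 0 := Nat.cast_ne_zero.mpr (by omega)
      have key : ∀ n : ℕ, (Dn n).esymm k = (k : ℚ)⁻¹ * ((-1) ^ (k + 1) *
          ∑ a ∈ (Finset.HasAntidiagonal.antidiagonal k).filter (fun a => a.1 < k),
            (-1 : ℚ) ^ a.1 * (Dn n).esymm a.1 * ((Dn n).map (· ^ a.2)).sum) := by
        intro n
        rw [← multiset_newton, inv_mul_cancel_left₀ hkQ]
      have hsum : IsPF (fun n => ∑ a ∈ (Finset.HasAntidiagonal.antidiagonal k).filter (fun a => a.1 < k),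
          (-1 : ℚ) ^ a.1 * (Dn n).esymm a.1 * ((Dn n).map (· ^ a.2)).sum) := by
        refine IsPF.finsetSum _ _ fun a ha => ?_
        have ha1 : a.1 < k := (Finset.mem_filter.mp ha).2
        obtain ⟨Q, hQ⟩ := isPF_psum a.2
        exact ((IsPF.const ((-1 : ℚ) ^ a.1)).mul (ih a.1 ha1)).mul ⟨Q, hQ⟩
      obtain ⟨P, hP⟩ := hsum
      refine ⟨C ((k : ℚ)⁻¹ * (-1) ^ (k + 1)) * P, fun n => ?_⟩
      have hP' : (∑ a ∈ (Finset.HasAntidiagonal.antidiagonal k).filter (fun a => a.1 < k),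
          (-1 : ℚ) ^ a.1 * (Dn n).esymm a.1 * ((Dn n).map (· ^ a.2)).sum)
            = P.eval (n : ℚ) := hP n
      show (Dn n).esymm k = eval (n : ℚ) (C ((k : ℚ)⁻¹ * (-1) ^ (k + 1)) * P)
      rw [key n, eval_mul, eval_C, ← hP']
      ring

/-- For every partition `μ`, `e_μ(D_n)` is a polynomial function of `n`
for `n ≥ 1`. -/
theorem stmt13 (k : ℕ) (μ : Fin k → ℕ) (hμ : ∀ i j : Fin k, i ≤ j → μ j ≤ μ i) :
    ∃ P : Polynomial ℚ, ∀ n : ℕ, 1 ≤ n →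
      ∏ h : Fin k, Multiset.esymm (Dn n) (μ h) = P.eval (n : ℚ) := by
  have h : IsPF (fun n => ∏ h : Fin k, Multiset.esymm (Dn n) (μ h)) :=
    IsPF.finsetProd _ _ fun i _ => isPF_esymm (μ i)
  obtain ⟨P, hP⟩ := h
  exact ⟨P, fun n _ => hP n⟩
end
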